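/- If A and B are complex n×n matrices such that the n×2n block matrix (A, B) has rank n and AB† is Hermitian (AB† = BA†), then for every real γ > 0 the matrix A - iγB is invertible. -/

import Mathlib

open Matrix

/-- If `(A, B)` has rank `n` and `A Bᴴ` is Hermitian, then for every real `γ > 0`
the matrix `A - iγB` is invertible. -/
theorem transition_matrix_invertible (n : ℕ) (A B : Matrix (Fin n) (Fin n) ℂ)
    (hrank : (Matrix.fromCols A B).rank = n)
    (hherm : A * Bᴴ = B * Aᴴ)
    (γ : ℝ) (hγ : 0 < γ) :
    IsUnit (A - ((γ : ℂ) * Complex.I) • B) := by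
  set c : ℂ := (γ : ℂ) * Complex.I with hc
  -- rows of (A, B) are linearly independent
  have hli : LinearIndependent ℂ (fun i => (Matrix.fromCols A B) i) := by
    rw [linearIndependent_iff_card_eq_finrank_span]
    rw [Matrix.rank_eq_finrank_span_row] at hrank
    have h := hrank.symm; simp [Set.finrank, Matrix.row] at h ⊢; exact h
  have hinj : Function.Injective (Matrix.fromCols A B).vecMul :=
    Matrix.vecMul_injective_iff.mpr hli
  -- it suffices to show the left kernel of A - c • B is trivial
  have key : ∀ v : Fin n → ℂ, v ᵥ* (A - c • B) = 0 → v = 0 := by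
    intro v hv
    have hsm : v ᵥ* (c • B) = c • (v ᵥ* B) := by
      ext j; simp [Matrix.vecMul, dotProduct, Finset.mul_sum, mul_left_comm]
    rw [Matrix.vecMul_sub, hsm, sub_eq_zero] at hv
    set a : Fin n → ℂ := v ᵥ* A with ha
    set b : Fin n → ℂ := v ᵥ* B with hb
    -- key identity from hermiticity of A Bᴴ
    have hsym : a ⬝ᵥ star b = b ⬝ᵥ star a := by
      rw [ha, hb, Matrix.star_vecMul, Matrix.star_vecMul, Matrix.dotProduct_mulVec,
        Matrix.dotProduct_mulVec, Matrix.vecMul_vecMul, Matrix.vecMul_vecMul, hherm]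
    have hbz : b = 0 := by
      rw [hv] at hsym
      have h1 : (c • b) ⬝ᵥ star b = c * (b ⬝ᵥ star b) := by
        rw [smul_dotProduct]; simp
      have h2 : b ⬝ᵥ star (c • b) = star c * (b ⬝ᵥ star b) := by
        rw [star_smul, dotProduct_smul]; simp
      rw [h1, h2] at hsym
      have hcc : c ≠ star c := by
        simp only [hc, star_mul', Complex.star_def, Complex.conj_I, Complex.conj_ofReal]
        intro h
        have : (γ : ℂ) * Complex.I = 0 := by linear_combination h / 2
        simp [Complex.ext_iff, hγ.ne'] at this
      have hbb : b ⬝ᵥ star b = 0 := by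
        by_contra hne
        exact hcc (mul_right_cancel₀ hne hsym)
      have hbb' : ∑ j, (Complex.normSq (b j) : ℂ) = 0 := by
        rw [← hbb]; simp [dotProduct, Complex.mul_conj]
      have hbb'' : ∑ j, Complex.normSq (b j) = 0 := by exact_mod_cast hbb'
      funext j
      have := (Finset.sum_eq_zero_iff_of_nonneg
        (fun j _ => Complex.normSq_nonneg (b j))).mp hbb'' j (Finset.mem_univ j)
      simpa [Complex.normSq_eq_zero] using this
    have haz : a = 0 := by rw [hv, hbz, smul_zero]
    have : v ᵥ* (Matrix.fromCols A B) = (0 : Fin n → ℂ) ᵥ* (Matrix.fromCols A B) := by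
      rw [Matrix.vecMul_fromCols, Matrix.zero_vecMul, ← ha, ← hb, haz, hbz]
      ext (_ | _) <;> simp
    exact hinj this
  rw [← Matrix.vecMul_injective_iff_isUnit]
  intro u w huw
  have : (u - w) ᵥ* (A - c • B) = 0 := by
    rw [Matrix.sub_vecMul, show u ᵥ* (A - c • B) = w ᵥ* (A - c • B) from huw, sub_self]
  have := key _ this
  exact sub_eq_zero.mp this
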